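/- Let a < b be real numbers, Λ > 0, α ∈ ℝ, and for n ∈ ℤ set αₙ := α + 2πn/Λ. Let (uₙ)_{n∈ℤ} be a family of continuously differentiable functions uₙ : [a, b] → ℂ such that the family n ↦ ∫ₐᵇ ((1 + αₙ²)|uₙ(y)|² + |uₙ′(y)|²) dy is summable. Then the family n ↦ (1 + αₙ²)^{1/2}|uₙ(b)|² is summable and Σ_{n∈ℤ} (1 + αₙ²)^{1/2} |uₙ(b)|² ≤ (1 + (b − a)⁻¹) Σ_{n∈ℤ} ∫ₐᵇ ((1 + αₙ²)|uₙ(y)|² + |uₙ′(y)|²) dy. -/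

import Mathlib

open MeasureTheory intervalIntegral Set

lemma trace_key {a b : ℝ} (hab : a < b) {β : ℝ} (hβ : 1 ≤ β)
    {u u' : ℝ → ℂ}
    (hderiv : ∀ y ∈ Set.Icc a b, HasDerivWithinAt u (u' y) (Set.Icc a b) y)
    (hcont : ContinuousOn u' (Set.Icc a b)) :
    β * ‖u b‖ ^ 2 ≤ (1 + (b - a)⁻¹) *
      ∫ y in a..b, (β ^ 2 * ‖u y‖ ^ 2 + ‖u' y‖ ^ 2) := by
  have hba : (0:ℝ) < b - a := sub_pos.2 hab
  have hβ0 : (0:ℝ) < β := lt_of_lt_of_le one_pos hβ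
  have hu : ContinuousOn u (Set.Icc a b) := fun y hy => (hderiv y hy).continuousWithinAt
  set g : ℝ → ℝ := fun y => (y - a) / (b - a) * ‖u y‖ ^ 2 with hg_def
  set g' : ℝ → ℝ := fun y =>
    (b - a)⁻¹ * ‖u y‖ ^ 2 + (y - a) / (b - a) * (2 * (inner ℝ (u y) (u' y) : ℝ)) with hg'_def
  have hgd : ∀ y ∈ Set.Icc a b, HasDerivWithinAt g (g' y) (Set.Icc a b) y := by
    intro y hy
    have h1 : HasDerivWithinAt (fun y : ℝ => (y - a) / (b - a)) ((b - a)⁻¹) (Set.Icc a b) y := by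
      simpa [div_eq_mul_inv, one_mul] using
        (((hasDerivWithinAt_id y (Set.Icc a b)).sub_const a).div_const (b - a))
    have h2 : HasDerivWithinAt (fun y => (inner ℝ (u y) (u y) : ℝ))
        (2 * (inner ℝ (u y) (u' y) : ℝ)) (Set.Icc a b) y := by
      have := ((hderiv y hy).inner (𝕜 := ℝ) (hderiv y hy))
      simpa [real_inner_comm, two_mul] using this
    have h3 : HasDerivWithinAt (fun y => ‖u y‖ ^ 2)
        (2 * (inner ℝ (u y) (u' y) : ℝ)) (Set.Icc a b) y := by
      have : (fun y => ‖u y‖ ^ 2) = fun y => (inner ℝ (u y) (u y) : ℝ) := by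
        funext z; rw [real_inner_self_eq_norm_sq]
      rw [this]; exact h2
    exact h1.mul h3
  have hucont : ContinuousOn g (Set.Icc a b) :=
    (((continuousOn_id.sub continuousOn_const).div_const (b - a))).mul
      (hu.norm.pow 2)
  have hinner_cont : ContinuousOn (fun y => (inner ℝ (u y) (u' y) : ℝ)) (Set.Icc a b) :=
    hu.inner hcont
  have hg'cont : ContinuousOn g' (Set.Icc a b) := by
    apply ContinuousOn.add
    · exact continuousOn_const.mul (hu.norm.pow 2)
    · exact ((continuousOn_id.sub continuousOn_const).div_const (b - a)).mul
        (continuousOn_const.mul hinner_cont)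
  have hg'int : IntervalIntegrable g' volume a b := by
    apply ContinuousOn.intervalIntegrable
    rwa [Set.uIcc_of_le hab.le]
  have hftc : ∫ y in a..b, g' y = g b - g a := by
    apply intervalIntegral.integral_eq_sub_of_hasDeriv_right_of_le hab.le hucont
    · intro x hx
      exact (hgd x (Set.mem_Icc_of_Ioo hx)).mono_of_mem_nhdsWithin
        (Icc_mem_nhdsGT_of_mem ⟨hx.1.le, hx.2⟩)
    · exact hg'int
  have hgb : g b = ‖u b‖ ^ 2 := by
    simp [hg_def, div_self hba.ne']
  have hga : g a = 0 := by simp [hg_def]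
  -- pointwise bound : β * g' y ≤ (1+(b-a)⁻¹) * (β²‖u‖² + ‖u'‖²)
  have hpt : ∀ y ∈ Set.Icc a b,
      β * g' y ≤ (1 + (b - a)⁻¹) * (β ^ 2 * ‖u y‖ ^ 2 + ‖u' y‖ ^ 2) := by
    intro y hy
    have hw0 : 0 ≤ (y - a) / (b - a) := div_nonneg (sub_nonneg.2 hy.1) hba.le
    have hw1 : (y - a) / (b - a) ≤ 1 := by
      rw [div_le_one hba]; linarith [hy.2]
    have habs : |(inner ℝ (u y) (u' y) : ℝ)| ≤ ‖u y‖ * ‖u' y‖ := abs_real_inner_le_norm _ _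
    have h1 : (inner ℝ (u y) (u' y) : ℝ) ≤ ‖u y‖ * ‖u' y‖ := (abs_le.1 habs).2
    have h2 : -(‖u y‖ * ‖u' y‖) ≤ (inner ℝ (u y) (u' y) : ℝ) := (abs_le.1 habs).1
    have hN : 0 ≤ ‖u y‖ * ‖u' y‖ := mul_nonneg (norm_nonneg _) (norm_nonneg _)
    have hwt : (y - a) / (b - a) * (2 * (inner ℝ (u y) (u' y) : ℝ)) ≤ 2 * (‖u y‖ * ‖u' y‖) := by
      nlinarith [mul_nonneg hw0 (sub_nonneg.2 h1),
        mul_nonneg (sub_nonneg.2 hw1) hN]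
    have hinv : (0:ℝ) < (b - a)⁻¹ := inv_pos.2 hba
    have hsq : 0 ≤ (β * ‖u y‖ - ‖u' y‖) ^ 2 := sq_nonneg _
    have hbb : β ≤ β ^ 2 := by nlinarith
    simp only [hg'_def]
    have hn1 : 0 ≤ ‖u y‖ ^ 2 := sq_nonneg _
    have hn2 : 0 ≤ ‖u' y‖ ^ 2 := sq_nonneg _
    nlinarith [mul_le_mul_of_nonneg_left hwt hβ0.le,
      mul_le_mul_of_nonneg_right hbb (mul_nonneg hinv.le hn1),
      mul_nonneg hinv.le hn2]
  have hrhsint : IntervalIntegrable (fun y => (1 + (b - a)⁻¹) *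
      (β ^ 2 * ‖u y‖ ^ 2 + ‖u' y‖ ^ 2)) volume a b := by
    apply ContinuousOn.intervalIntegrable
    rw [Set.uIcc_of_le hab.le]
    exact continuousOn_const.mul
      ((continuousOn_const.mul (hu.norm.pow 2)).add (hcont.norm.pow 2))
  have hmono : ∫ y in a..b, β * g' y ≤
      ∫ y in a..b, (1 + (b - a)⁻¹) * (β ^ 2 * ‖u y‖ ^ 2 + ‖u' y‖ ^ 2) := by
    apply intervalIntegral.integral_mono_on hab.le (hg'int.const_mul β) hrhsint
    intro y hy; exact hpt y hy
  calc β * ‖u b‖ ^ 2 = β * ∫ y in a..b, g' y := by rw [hftc, hgb, hga, sub_zero]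
    _ = ∫ y in a..b, β * g' y := by rw [intervalIntegral.integral_const_mul]
    _ ≤ ∫ y in a..b, (1 + (b - a)⁻¹) * (β ^ 2 * ‖u y‖ ^ 2 + ‖u' y‖ ^ 2) := hmono
    _ = (1 + (b - a)⁻¹) * ∫ y in a..b, (β ^ 2 * ‖u y‖ ^ 2 + ‖u' y‖ ^ 2) := by
        rw [intervalIntegral.integral_const_mul]

/-- Fourier-coefficient form of the trace lemma (Lemma 3.3):
`Σₙ (1 + αₙ²)^{1/2}|uₙ(b)|² ≤ (1 + (b − a)⁻¹) Σₙ ∫ₐᵇ ((1 + αₙ²)|uₙ|² + |uₙ′|²)`. -/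
theorem trace_lemma_fourier
    (a b Λ α : ℝ) (hab : a < b) (hΛ : 0 < Λ)
    (αn : ℤ → ℝ) (hαn : ∀ n : ℤ, αn n = α + 2 * Real.pi * (n : ℝ) / Λ)
    (u u' : ℤ → ℝ → ℂ)
    (hderiv : ∀ n : ℤ, ∀ y ∈ Set.Icc a b,
      HasDerivWithinAt (u n) (u' n y) (Set.Icc a b) y)
    (hcont : ∀ n : ℤ, ContinuousOn (u' n) (Set.Icc a b))
    (hsummable : Summable fun n : ℤ =>
      ∫ y in a..b, ((1 + (αn n) ^ 2) * ‖u n y‖ ^ 2 + ‖u' n y‖ ^ 2)) :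
    (Summable fun n : ℤ => Real.sqrt (1 + (αn n) ^ 2) * ‖u n b‖ ^ 2) ∧
    (∑' n : ℤ, Real.sqrt (1 + (αn n) ^ 2) * ‖u n b‖ ^ 2)
      ≤ (1 + (b - a)⁻¹) *
        ∑' n : ℤ, ∫ y in a..b, ((1 + (αn n) ^ 2) * ‖u n y‖ ^ 2 + ‖u' n y‖ ^ 2) := by
  have key : ∀ n : ℤ, Real.sqrt (1 + (αn n) ^ 2) * ‖u n b‖ ^ 2 ≤
      (1 + (b - a)⁻¹) * ∫ y in a..b, ((1 + (αn n) ^ 2) * ‖u n y‖ ^ 2 + ‖u' n y‖ ^ 2) := by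
    intro n
    have h1 : (1:ℝ) ≤ 1 + (αn n) ^ 2 := by nlinarith [sq_nonneg (αn n)]
    have hβ : 1 ≤ Real.sqrt (1 + (αn n) ^ 2) := by
      have := Real.sqrt_le_sqrt h1
      rwa [Real.sqrt_one] at this
    have hβsq : Real.sqrt (1 + (αn n) ^ 2) ^ 2 = 1 + (αn n) ^ 2 :=
      Real.sq_sqrt (by positivity)
    have := trace_key hab hβ (hderiv n) (hcont n)
    rwa [hβsq] at this
  have hnn : ∀ n : ℤ, 0 ≤ Real.sqrt (1 + (αn n) ^ 2) * ‖u n b‖ ^ 2 := by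
    intro n; positivity
  have hsum2 : Summable fun n : ℤ => (1 + (b - a)⁻¹) *
      ∫ y in a..b, ((1 + (αn n) ^ 2) * ‖u n y‖ ^ 2 + ‖u' n y‖ ^ 2) :=
    hsummable.mul_left _
  have hs : Summable fun n : ℤ => Real.sqrt (1 + (αn n) ^ 2) * ‖u n b‖ ^ 2 :=
    Summable.of_nonneg_of_le hnn key hsum2
  refine ⟨hs, ?_⟩
  calc (∑' n : ℤ, Real.sqrt (1 + (αn n) ^ 2) * ‖u n b‖ ^ 2)
      ≤ ∑' n : ℤ, (1 + (b - a)⁻¹) *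
        ∫ y in a..b, ((1 + (αn n) ^ 2) * ‖u n y‖ ^ 2 + ‖u' n y‖ ^ 2) :=
        Summable.tsum_le_tsum key hs hsum2
    _ = (1 + (b - a)⁻¹) *
        ∑' n : ℤ, ∫ y in a..b, ((1 + (αn n) ^ 2) * ‖u n y‖ ^ 2 + ‖u' n y‖ ^ 2) :=
        tsum_mul_left
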